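/- Let f : Y → Y' be a dominant morphism, locally of finite type, between irreducible and reduced (i.e., integral) noetherian schemes, such that the function field of Y is a finite extension of the function field of Y' (f is generically finite) and the canonical morphism of sheaves O_{Y'} → f_* O_Y is an isomorphism. Then f is birational; that is, the induced map between the function fields of Y' and Y is an isomorphism. -/

import Mathlib

open AlgebraicGeometry CategoryTheory Opposite TopologicalSpace

/-- On an integral scheme, a point whose stalk is a field must be the generic point. -/
lemma eq_genericPoint_of_isField_stalk {Y : Scheme} [IsIntegral Y] {y : Y}
    (hfield : IsField (Y.presheaf.stalk y)) : y = genericPoint Y := by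
  let W : Y.Opens := (Y.affineCover.f (Y.affineCover.idx y)).opensRange
  have hW : IsAffineOpen W := isAffineOpen_opensRange _
  have hyW : y ∈ W := Y.affineCover.covers y
  haveI : Nonempty W := ⟨⟨y, hyW⟩⟩
  have hηW : genericPoint Y ∈ W :=
    ((genericPoint_spec Y).mem_open_set_iff W.isOpen).mpr ⟨y, trivial, hyW⟩
  have key : ∀ (x : Y) (hx : x ∈ W), IsField (Y.presheaf.stalk x) →
      (hW.primeIdealOf ⟨x, hx⟩).asIdeal = ⊥ := by
    intro x hx hf
    letI := Y.presheaf.algebra_section_stalk (⟨x, hx⟩ : W)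
    haveI hloc := hW.isLocalization_stalk ⟨x, hx⟩
    have hmax : IsLocalRing.maximalIdeal (Y.presheaf.stalk x) = ⊥ :=
      IsLocalRing.isField_iff_maximalIdeal_eq.mp hf
    ext z
    simp only [Ideal.mem_bot]
    constructor
    · intro hz
      have h0 : algebraMap Γ(Y, W) (Y.presheaf.stalk x) z = 0 := by
        have := (IsLocalization.AtPrime.to_map_mem_maximal_iff
          (Y.presheaf.stalk x) (hW.primeIdealOf ⟨x, hx⟩).asIdeal z).mpr hz
        rwa [hmax, Ideal.mem_bot] at this
      exact IsLocalization.injective (Y.presheaf.stalk x)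
        (hW.primeIdealOf ⟨x, hx⟩).asIdeal.primeCompl_le_nonZeroDivisors
        (by rw [h0, map_zero])
    · rintro rfl; exact Ideal.zero_mem _
  have hp := key y hyW hfield
  have hq := key (genericPoint Y) hηW (Field.toIsField _)
  have hpq : hW.primeIdealOf ⟨y, hyW⟩ = hW.primeIdealOf ⟨genericPoint Y, hηW⟩ := by
    apply PrimeSpectrum.ext; rw [hp, hq]
  have h1 := hW.fromSpec_primeIdealOf ⟨y, hyW⟩
  have h2 := hW.fromSpec_primeIdealOf ⟨genericPoint Y, hηW⟩
  rw [hpq] at h1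
  exact h1.symm.trans h2

/-- Let `f : Y ⟶ Y'` be a dominant, locally of finite type morphism of integral
noetherian schemes which is generically finite (the induced extension of
function fields, i.e. the stalk map at the generic point, is module-finite)
and satisfies `O_{Y'} ≅ f_* O_Y`.  Then `f` is birational: the induced map on
function fields is an isomorphism. -/
theorem birational_of_genericallyFinite_of_pushforward_iso
    {Y Y' : Scheme} (f : Y ⟶ Y')
    [IsIntegral Y] [IsIntegral Y'] [IsNoetherian Y] [IsNoetherian Y']
    [LocallyOfFiniteType f] [IsDominant f]
    (hfin : RingHom.Finite (f.stalkMap (genericPoint Y)).hom)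
    (hc : IsIso f.c) :
    IsIso (f.stalkMap (genericPoint Y)) := by
  have hcont : Continuous f.base := by fun_prop
  -- the generic point maps to the generic point
  have hgen : f.base (genericPoint Y) = genericPoint Y' := by
    have h1 := (genericPoint_spec Y).image hcont
    rw [Set.image_univ, f.denseRange.closure_eq] at h1
    exact h1.eq (genericPoint_spec Y')
  have hK' : IsField (Y'.presheaf.stalk (f.base (genericPoint Y))) := by
    rw [hgen]; exact Field.toIsField _
  -- the fiber over the generic point is a singleton
  have hfiber : ∀ y : Y, f.base y = f.base (genericPoint Y) → y = genericPoint Y := by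
    intro y hy
    have hsp : genericPoint Y ⤳ y := genericPoint_specializes y
    set ℓ := Y.presheaf.stalkSpecializes hsp with hℓdef
    have hℓinj : Function.Injective ℓ :=
      IsFractionRing.injective (Y.presheaf.stalk y) Y.functionField
    set σ := Y'.presheaf.stalkSpecializes (f.base.hom.map_specializes hsp) with hσdef
    have e : Inseparable (f.base (genericPoint Y)) (f.base y) := Inseparable.of_eq hy.symm
    haveI : IsIso σ := inferInstanceAs (IsIso (Y'.presheaf.stalkCongr e).inv)
    letI : Algebra (Y'.presheaf.stalk (f.base (genericPoint Y))) (Y.presheaf.stalk y) :=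
      ((f.stalkMap y).hom.comp (inv σ).hom).toAlgebra
    have hkey : ℓ.hom.comp ((f.stalkMap y).hom.comp (inv σ).hom) = (f.stalkMap (genericPoint Y)).hom := by
      ext k
      have h1 := Scheme.Hom.stalkSpecializes_stalkMap_apply f (genericPoint Y) y hsp ((inv σ) k)
      have h2 : σ ((inv σ) k) = k := by
        rw [← CategoryTheory.comp_apply, IsIso.inv_hom_id, CategoryTheory.id_apply]
      simp only [RingHom.comp_apply]
      rw [← h1, h2]
    haveI : Algebra.IsIntegral (Y'.presheaf.stalk (f.base (genericPoint Y)))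
        (Y.presheaf.stalk y) := by
      constructor
      intro a
      obtain ⟨P, hPmonic, hPeval⟩ := hfin.to_isIntegral (ℓ a)
      refine ⟨P, hPmonic, hℓinj ?_⟩
      rw [map_zero, Polynomial.hom_eval₂, RingHom.algebraMap_toAlgebra, hkey]
      exact hPeval
    haveI : IsDomain (Y.presheaf.stalk y) := Function.Injective.isDomain ℓ.hom hℓinj
    exact eq_genericPoint_of_isField_stalk (isField_of_isIntegral_of_isField' hK')
  rw [ConcreteCategory.isIso_iff_bijective]
  constructor
  · -- injectivity: ring hom out of a field
    letI := hK'.toField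
    haveI : Nontrivial ((forget CommRingCat).obj (Y.presheaf.stalk (genericPoint Y))) :=
      inferInstanceAs (Nontrivial Y.functionField)
    exact RingHom.injective _
  · -- surjectivity
    intro t
    obtain ⟨V, hηV, s, rfl⟩ := TopCat.Presheaf.exists_germ_eq Y.presheaf t
    have hZ : IsClosed ((V : Set Y)ᶜ) := V.isOpen.isClosed_compl
    have hη' : genericPoint Y' ∉ closure (f.base '' (V : Set Y)ᶜ) := by
      intro hmem
      have hdense : closure (f.base '' (V : Set Y)ᶜ) = Set.univ := by
        apply Set.eq_univ_of_univ_subset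
        rw [← genericPoint_closure (α := Y')]
        exact closure_minimal (Set.singleton_subset_iff.mpr hmem) isClosed_closure
      obtain ⟨S, hSfin, hSclosed, hSirr, hZeq⟩ :=
        NoetherianSpace.exists_finite_set_isClosed_irreducible hZ
      have hcover : (Set.univ : Set Y') = ⋃ s ∈ S, closure (f.base '' s) := by
        rw [← hdense, hZeq, Set.sUnion_eq_biUnion, Set.image_iUnion₂,
          hSfin.closure_biUnion]
      obtain ⟨z, hzS, hzdense⟩ : ∃ z ∈ S, (Set.univ : Set Y') ⊆ closure (f.base '' z) := by
        classical
        obtain ⟨c, hcmem, hcsub⟩ := isIrreducible_iff_sUnion_isClosed.mp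
          (IrreducibleSpace.isIrreducible_univ Y')
          (hSfin.toFinset.image fun s => closure (f.base '' s))
          (by
            intro c hc
            simp only [Finset.mem_image, Set.Finite.mem_toFinset] at hc
            obtain ⟨s, _, rfl⟩ := hc
            exact isClosed_closure)
          (by
            rw [Finset.coe_image, Set.Finite.coe_toFinset, Set.sUnion_image, ← hcover])
        simp only [Finset.mem_image, Set.Finite.mem_toFinset] at hcmem
        obtain ⟨z, hzS, rfl⟩ := hcmem
        exact ⟨z, hzS, hcsub⟩
      have hzirr := hSirr z hzS
      have hzclosed := hSclosed z hzS
      have hζ : IsGenericPoint hzirr.genericPoint z :=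
        hzirr.isGenericPoint_genericPoint hzclosed
      have hfζ : IsGenericPoint (f.base hzirr.genericPoint) Set.univ := by
        rw [isGenericPoint_def]
        refine subset_antisymm (Set.subset_univ _) ?_
        refine hzdense.trans (closure_minimal ?_ isClosed_closure)
        have hzsub : z ⊆ closure {hzirr.genericPoint} := hζ.def.symm.subset
        refine (Set.image_mono hzsub).trans ?_
        refine (image_closure_subset_closure_image hcont).trans ?_
        rw [Set.image_singleton]
      have hfz : f.base hzirr.genericPoint = genericPoint Y' := hfζ.eq (genericPoint_spec Y')
      have hzη : hzirr.genericPoint = genericPoint Y :=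
        hfiber _ (hfz.trans hgen.symm)
      have hmemz : hzirr.genericPoint ∈ (V : Set Y)ᶜ := by
        rw [hZeq]; exact ⟨z, hzS, hζ.mem⟩
      rw [hzη] at hmemz
      exact hmemz hηV
    set U' : Y'.Opens := ⟨(closure (f.base '' (V : Set Y)ᶜ))ᶜ, isClosed_closure.isOpen_compl⟩
    have hfη : f.base (genericPoint Y) ∈ U' := by
      show f.base (genericPoint Y) ∈ (closure (f.base '' (V : Set Y)ᶜ))ᶜ
      rw [hgen]; exact hη'
    have hle : f ⁻¹ᵁ U' ≤ V := by
      intro x hx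
      by_contra hxV
      exact hx (subset_closure ⟨x, hxV, rfl⟩)
    haveI : IsIso (f.app U') := inferInstanceAs (IsIso (f.c.app (op U')))
    obtain ⟨r, hr⟩ := (ConcreteCategory.bijective_of_isIso (f.app U')).2
      (Y.presheaf.map (homOfLE hle).op s)
    have hr' : f.app U' r = Y.presheaf.map (homOfLE hle).op s := hr
    refine ⟨Y'.presheaf.germ U' (f.base (genericPoint Y)) hfη r, ?_⟩
    exact (Scheme.Hom.germ_stalkMap_apply f U' _ hfη r).trans
      (by rw [hr']; exact TopCat.Presheaf.germ_res_apply _ _ _ _ _)
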